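/- Let σ > 0, θ(r) = (σ²/2 + √(σ⁴/4 + 2σ² r))/σ², and let F, G be probability distributions on (0,∞) with discount functions h_F, h_G. If h_F(t) ≥ h_G(t) for all t ≥ 0, then ∫₀^∞ θ(r) dF(r) ≤ ∫₀^∞ θ(r) dG(r), assuming both integrals are finite. -/

import Mathlib

open Real MeasureTheory Set

/-- The positive root `θ(r)` of `(1/2)σ²θ² - (1/2)σ²θ - r = 0`. -/
noncomputable def θfun (σ r : ℝ) : ℝ :=
  (σ^2 / 2 + Real.sqrt (σ^4 / 4 + 2 * σ^2 * r)) / σ^2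

/-- The discount function induced by the weighting distribution `F`. -/
noncomputable def discount (F : Measure ℝ) (t : ℝ) : ℝ := ∫ r, Real.exp (-r * t) ∂F

noncomputable def f1 (t : ℝ) : ℝ := t ^ (-3/2 : ℝ) * (1 - Real.exp (-t))

lemma f1_meas : Measurable f1 := by unfold f1; fun_prop

lemma f1_nonneg {t : ℝ} (ht : 0 < t) : 0 ≤ f1 t :=
  mul_nonneg (Real.rpow_nonneg ht.le _)
    (sub_nonneg.2 (Real.exp_le_one_iff.2 (by linarith)))

lemma f1_pos {t : ℝ} (ht : 0 < t) : 0 < f1 t :=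
  mul_pos (Real.rpow_pos_of_pos ht _)
    (sub_pos.2 (by rw [Real.exp_lt_one_iff]; linarith))

lemma f1_integrable : IntegrableOn f1 (Ioi 0) := by
  have h1 : IntegrableOn f1 (Ioc 0 1) := by
    have hg : IntegrableOn (fun t : ℝ => t ^ (-1/2 : ℝ)) (Ioc 0 1) := by
      refine ((intervalIntegral.integrableOn_Ioo_rpow_iff (by norm_num : (0:ℝ) < 2)).mpr (by norm_num)).mono_set ?_
      exact fun t ht => ⟨ht.1, lt_of_le_of_lt ht.2 one_lt_two⟩
    refine hg.mono' f1_meas.aestronglyMeasurable ?_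
    refine (ae_restrict_iff' measurableSet_Ioc).2 (ae_of_all _ fun t ht => ?_)
    rw [Real.norm_eq_abs, abs_of_nonneg (f1_nonneg ht.1)]
    have hb : 1 - Real.exp (-t) ≤ t := by
      have := Real.add_one_le_exp (-t); linarith
    calc f1 t ≤ t ^ (-3/2 : ℝ) * t :=
          mul_le_mul_of_nonneg_left hb (Real.rpow_nonneg ht.1.le _)
      _ = t ^ (-1/2 : ℝ) := by
          rw [← Real.rpow_add_one ht.1.ne']; norm_num
  have h2 : IntegrableOn f1 (Ioi 1) := by
    have hg : IntegrableOn (fun t : ℝ => t ^ (-3/2 : ℝ)) (Ioi 1) :=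
      (integrableOn_Ioi_rpow_iff zero_lt_one).mpr (by norm_num)
    refine hg.mono' f1_meas.aestronglyMeasurable ?_
    refine (ae_restrict_iff' measurableSet_Ioi).2 (ae_of_all _ fun t ht => ?_)
    have ht0 : (0:ℝ) < t := lt_trans zero_lt_one ht
    rw [Real.norm_eq_abs, abs_of_nonneg (f1_nonneg ht0)]
    have : 1 - Real.exp (-t) ≤ 1 := by have := Real.exp_pos (-t); linarith
    calc f1 t ≤ t ^ (-3/2 : ℝ) * 1 :=
          mul_le_mul_of_nonneg_left this (Real.rpow_nonneg ht0.le _)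
      _ = t ^ (-3/2 : ℝ) := mul_one _
  have := h1.union h2
  rwa [Ioc_union_Ioi_eq_Ioi zero_le_one] at this

lemma C_pos : 0 < ∫ t in Ioi (0:ℝ), f1 t := by
  rw [setIntegral_pos_iff_support_of_nonneg_ae
    ((ae_restrict_iff' measurableSet_Ioi).2 (ae_of_all _ fun t ht => f1_nonneg ht))
    f1_integrable]
  have hsub : Ioi (0:ℝ) ⊆ Function.support f1 ∩ Ioi 0 :=
    fun t ht => ⟨(f1_pos ht).ne', ht⟩
  calc (0:ENNReal) < volume (Ioi (0:ℝ)) := by simp [Real.volume_Ioi]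
    _ ≤ volume (Function.support f1 ∩ Ioi 0) := measure_mono hsub

lemma scaled_eq {x : ℝ} (hx : 0 < x) {t : ℝ} (ht : 0 < t) :
    x ^ ((3:ℝ)/2) * f1 (x * t) = t ^ (-3/2 : ℝ) * (1 - Real.exp (-(x * t))) := by
  unfold f1
  rw [Real.mul_rpow hx.le ht.le, ← mul_assoc, ← mul_assoc, ← Real.rpow_add hx]
  norm_num

lemma scaled_integrable {x : ℝ} (hx : 0 < x) :
    IntegrableOn (fun t => t ^ (-3/2 : ℝ) * (1 - Real.exp (-(x * t)))) (Ioi 0) := by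
  have h0 : IntegrableOn (fun t => f1 (x * t)) (Ioi 0) := by
    have := (integrableOn_Ioi_comp_mul_left_iff f1 0 hx).mpr
    rw [mul_zero] at this
    exact this f1_integrable
  refine ((h0.const_mul (x ^ ((3:ℝ)/2))).congr ?_)
  exact (ae_restrict_iff' measurableSet_Ioi).2 (ae_of_all _ fun t ht => scaled_eq hx ht)

lemma scaling {x : ℝ} (hx : 0 < x) :
    ∫ t in Ioi (0:ℝ), t ^ (-3/2 : ℝ) * (1 - Real.exp (-(x * t)))
      = Real.sqrt x * ∫ t in Ioi (0:ℝ), f1 t := by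
  have h1 : ∫ t in Ioi (0:ℝ), t ^ (-3/2 : ℝ) * (1 - Real.exp (-(x * t)))
      = ∫ t in Ioi (0:ℝ), x ^ ((3:ℝ)/2) * f1 (x * t) := by
    refine setIntegral_congr_fun measurableSet_Ioi fun t ht => ?_
    exact (scaled_eq hx ht).symm
  rw [h1, integral_const_mul]
  have h2 := integral_comp_mul_left_Ioi f1 0 hx
  rw [mul_zero] at h2
  rw [h2, smul_eq_mul, ← mul_assoc]
  congr 1
  rw [← Real.rpow_neg_one x, ← Real.rpow_add hx, Real.sqrt_eq_rpow]
  norm_num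

lemma J_eq {x : ℝ} (hx : 0 < x) :
    ∫⁻ t in Ioi (0:ℝ), ENNReal.ofReal (t ^ (-3/2 : ℝ) * (1 - Real.exp (-(x * t))))
      = ENNReal.ofReal (Real.sqrt x * ∫ t in Ioi (0:ℝ), f1 t) := by
  rw [← scaling hx, ← ofReal_integral_eq_lintegral_ofReal (scaled_integrable hx)]
  refine (ae_restrict_iff' measurableSet_Ioi).2 (ae_of_all _ fun t ht => ?_)
  have ht' := mem_Ioi.1 ht
  exact mul_nonneg (Real.rpow_nonneg ht'.le _)
    (sub_nonneg.2 (Real.exp_le_one_iff.2 (by nlinarith)))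

lemma disc_lintegral (F : Measure ℝ) [IsProbabilityMeasure F]
    (hFc : F (Ioi (0:ℝ))ᶜ = 0) {s : ℝ} (hs : 0 ≤ s) :
    ∫⁻ r, ENNReal.ofReal (1 - Real.exp (-(s * r))) ∂F
      = 1 - ENNReal.ofReal (discount F s) := by
  have hae : ∀ᵐ r ∂F, r ∈ Ioi (0:ℝ) := mem_ae_iff.mpr hFc
  have hgm : Measurable fun r : ℝ => ENNReal.ofReal (Real.exp (-(s * r))) := by fun_prop
  have hle : ∀ᵐ r ∂F, ENNReal.ofReal (Real.exp (-(s * r))) ≤ 1 := by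
    filter_upwards [hae] with r hr
    have hr' := mem_Ioi.1 hr
    have h : Real.exp (-(s * r)) ≤ 1 := Real.exp_le_one_iff.2 (by nlinarith)
    calc ENNReal.ofReal (Real.exp (-(s * r))) ≤ ENNReal.ofReal 1 := ENNReal.ofReal_le_ofReal h
      _ = 1 := ENNReal.ofReal_one
  have hint : Integrable (fun r : ℝ => Real.exp (-(s * r))) F := by
    refine (integrable_const (1:ℝ)).mono' (Measurable.aestronglyMeasurable (by fun_prop)) ?_
    filter_upwards [hae] with r hr
    have hr' := mem_Ioi.1 hr
    rw [Real.norm_eq_abs, abs_of_nonneg (Real.exp_nonneg _)]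
    exact Real.exp_le_one_iff.2 (by nlinarith)
  have hfin : ∫⁻ r, ENNReal.ofReal (Real.exp (-(s * r))) ∂F ≠ ⊤ := by
    refine ne_top_of_le_ne_top ?_ (lintegral_mono_ae hle)
    simp
  have h1 : ∀ r : ℝ, ENNReal.ofReal (1 - Real.exp (-(s * r)))
      = 1 - ENNReal.ofReal (Real.exp (-(s * r))) := by
    intro r
    rw [ENNReal.ofReal_sub _ (Real.exp_nonneg _), ENNReal.ofReal_one]
  simp_rw [h1]
  rw [lintegral_sub hgm hfin hle, lintegral_one, measure_univ]
  congr 1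
  rw [← ofReal_integral_eq_lintegral_ofReal hint (ae_of_all _ fun r => Real.exp_nonneg _)]
  unfold discount
  congr 1
  refine integral_congr_ae (ae_of_all _ fun r => ?_)
  ring_nf

lemma sqrt_quarter : Real.sqrt (1/4 : ℝ) = 1/2 := by
  rw [show (1/4:ℝ) = (1/2)^2 by norm_num, Real.sqrt_sq (by norm_num)]

lemma theta_eq (σ : ℝ) (hσ : 0 < σ) (r : ℝ) :
    θfun σ r = 1/2 + Real.sqrt (1/4 + 2*r/σ^2) := by
  unfold θfun
  have hσ2 : (0:ℝ) < σ^2 := by positivity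
  have h4 : σ^4/4 + 2*σ^2*r = (σ^2)^2 * (1/4 + 2*r/σ^2) := by
    field_simp
  rw [h4, Real.sqrt_mul (sq_nonneg _), Real.sqrt_sq hσ2.le]
  field_simp

lemma theta_ge (σ : ℝ) (hσ : 0 < σ) {r : ℝ} (hr : 0 ≤ r) : 1 ≤ θfun σ r := by
  rw [theta_eq σ hσ]
  have h0 : (0:ℝ) ≤ 2*r/σ^2 := div_nonneg (by linarith) (sq_nonneg σ)
  have := Real.sqrt_le_sqrt (show (1/4:ℝ) ≤ 1/4 + 2*r/σ^2 by linarith)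
  rw [sqrt_quarter] at this
  linarith

lemma stepA (σ : ℝ) (hσ : 0 < σ) {r : ℝ} (hr : 0 ≤ r) :
    ENNReal.ofReal (θfun σ r - 1) * ENNReal.ofReal (∫ t in Ioi (0:ℝ), f1 t)
      = ∫⁻ t in Ioi (0:ℝ), ENNReal.ofReal
          (t ^ (-3/2:ℝ) * Real.exp (-(1/4 * t)) * (1 - Real.exp (-(2*r/σ^2 * t)))) := by
  set C := ∫ t in Ioi (0:ℝ), f1 t with hCdef
  have hC : 0 ≤ C := C_pos.le
  set y := 1/4 + 2*r/σ^2 with hy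
  have h0 : (0:ℝ) ≤ 2*r/σ^2 := div_nonneg (by linarith) (sq_nonneg σ)
  have hy0 : 0 < y := by rw [hy]; linarith
  have hsq : 1/2 ≤ Real.sqrt y := by
    have := Real.sqrt_le_sqrt (show (1/4:ℝ) ≤ y by rw [hy]; linarith)
    rwa [sqrt_quarter] at this
  have hθ : θfun σ r - 1 = Real.sqrt y - 1/2 := by rw [theta_eq σ hσ, hy]; ring
  have hq : (0:ℝ) < 1/4 := by norm_num
  have hsplit : ∫⁻ t in Ioi (0:ℝ), ENNReal.ofReal (t ^ (-3/2:ℝ) * (1 - Real.exp (-(y * t))))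
      = (∫⁻ t in Ioi (0:ℝ), ENNReal.ofReal (t ^ (-3/2:ℝ) * (1 - Real.exp (-(1/4 * t)))))
        + ∫⁻ t in Ioi (0:ℝ), ENNReal.ofReal
            (t ^ (-3/2:ℝ) * Real.exp (-(1/4 * t)) * (1 - Real.exp (-(2*r/σ^2 * t)))) := by
    rw [← lintegral_add_left (by fun_prop)]
    refine setLIntegral_congr_fun measurableSet_Ioi fun t ht => ?_
    have ht' := mem_Ioi.1 ht
    have he : Real.exp (-(y * t)) = Real.exp (-(1/4 * t)) * Real.exp (-(2*r/σ^2 * t)) := by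
      rw [← Real.exp_add]; congr 1; rw [hy]; ring
    rw [← ENNReal.ofReal_add
      (mul_nonneg (Real.rpow_nonneg ht'.le _)
        (sub_nonneg.2 (Real.exp_le_one_iff.2 (by nlinarith))))
      (mul_nonneg (mul_nonneg (Real.rpow_nonneg ht'.le _) (Real.exp_nonneg _))
        (sub_nonneg.2 (Real.exp_le_one_iff.2 (by nlinarith))))]
    congr 1
    rw [he]; ring
  rw [J_eq hy0, J_eq hq, sqrt_quarter] at hsplit
  have lhs : ENNReal.ofReal (1/2 * C) + ENNReal.ofReal (θfun σ r - 1) * ENNReal.ofReal C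
      = ENNReal.ofReal (Real.sqrt y * C) := by
    rw [hθ, ← ENNReal.ofReal_mul (by linarith : (0:ℝ) ≤ Real.sqrt y - 1/2),
      ← ENNReal.ofReal_add (by positivity) (mul_nonneg (by linarith) hC)]
    congr 1; ring
  exact (ENNReal.add_right_inj ENNReal.ofReal_ne_top).1 (lhs.trans hsplit)

lemma aux_main (σ : ℝ) (hσ : 0 < σ) (F : Measure ℝ) [IsProbabilityMeasure F]
    (hFc : F (Ioi (0:ℝ))ᶜ = 0) :
    (∫⁻ r, ENNReal.ofReal (θfun σ r - 1) ∂F) * ENNReal.ofReal (∫ t in Ioi (0:ℝ), f1 t)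
      = ∫⁻ t in Ioi (0:ℝ), ENNReal.ofReal (t ^ (-3/2:ℝ) * Real.exp (-(1/4 * t)))
          * (1 - ENNReal.ofReal (discount F (2*t/σ^2))) := by
  have hae : ∀ᵐ r ∂F, r ∈ Ioi (0:ℝ) := mem_ae_iff.mpr hFc
  have hθm : Measurable fun r => ENNReal.ofReal (θfun σ r - 1) := by
    unfold θfun; fun_prop
  rw [← lintegral_mul_const _ hθm]
  have h1 : ∫⁻ r, ENNReal.ofReal (θfun σ r - 1) * ENNReal.ofReal (∫ t in Ioi (0:ℝ), f1 t) ∂F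
      = ∫⁻ r, (∫⁻ t in Ioi (0:ℝ), ENNReal.ofReal
          (t ^ (-3/2:ℝ) * Real.exp (-(1/4 * t)) * (1 - Real.exp (-(2*r/σ^2 * t))))) ∂F := by
    refine lintegral_congr_ae ?_
    filter_upwards [hae] with r hr
    exact stepA σ hσ (mem_Ioi.1 hr).le
  rw [h1]
  have hprod : AEMeasurable (Function.uncurry fun (r t : ℝ) => ENNReal.ofReal
      (t ^ (-3/2:ℝ) * Real.exp (-(1/4 * t)) * (1 - Real.exp (-(2*r/σ^2 * t)))))
      (F.prod (volume.restrict (Ioi 0))) := by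
    apply Measurable.aemeasurable
    unfold Function.uncurry
    fun_prop
  rw [lintegral_lintegral_swap hprod]
  refine setLIntegral_congr_fun measurableSet_Ioi fun t ht => ?_
  have ht' := mem_Ioi.1 ht
  have ha : (0:ℝ) ≤ t ^ (-3/2:ℝ) * Real.exp (-(1/4 * t)) :=
    mul_nonneg (Real.rpow_nonneg ht'.le _) (Real.exp_nonneg _)
  have hs : (0:ℝ) ≤ 2*t/σ^2 := div_nonneg (by linarith) (sq_nonneg σ)
  calc ∫⁻ r, ENNReal.ofReal
        (t ^ (-3/2:ℝ) * Real.exp (-(1/4 * t)) * (1 - Real.exp (-(2*r/σ^2 * t)))) ∂F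
      = ∫⁻ r, ENNReal.ofReal (t ^ (-3/2:ℝ) * Real.exp (-(1/4 * t)))
          * ENNReal.ofReal (1 - Real.exp (-(2*t/σ^2 * r))) ∂F := by
        refine lintegral_congr fun r => ?_
        rw [← ENNReal.ofReal_mul ha, show 2*r/σ^2 * t = 2*t/σ^2 * r by ring]
    _ = ENNReal.ofReal (t ^ (-3/2:ℝ) * Real.exp (-(1/4 * t)))
          * ∫⁻ r, ENNReal.ofReal (1 - Real.exp (-(2*t/σ^2 * r))) ∂F :=
        lintegral_const_mul _ (by fun_prop)
    _ = ENNReal.ofReal (t ^ (-3/2:ℝ) * Real.exp (-(1/4 * t)))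
          * (1 - ENNReal.ofReal (discount F (2*t/σ^2))) := by
        rw [disc_lintegral F hFc hs]

theorem stmt12 (σ : ℝ) (hσ : 0 < σ) (F G : Measure ℝ)
    [IsProbabilityMeasure F] [IsProbabilityMeasure G]
    (hFc : F (Ioi (0:ℝ))ᶜ = 0) (hGc : G (Ioi (0:ℝ))ᶜ = 0)
    (hdom : ∀ t : ℝ, 0 ≤ t → discount F t ≥ discount G t)
    (hIntF : Integrable (θfun σ) F)
    (hIntG : Integrable (θfun σ) G) :
    ∫ r, θfun σ r ∂F ≤ ∫ r, θfun σ r ∂G := by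
  have hC := C_pos
  have hJ0 : ENNReal.ofReal (∫ t in Ioi (0:ℝ), f1 t) ≠ 0 := (ENNReal.ofReal_pos.mpr hC).ne'
  have haeF : ∀ᵐ r ∂F, r ∈ Ioi (0:ℝ) := mem_ae_iff.mpr hFc
  have haeG : ∀ᵐ r ∂G, r ∈ Ioi (0:ℝ) := mem_ae_iff.mpr hGc
  have hnonnegF : 0 ≤ᵐ[F] fun r => θfun σ r - 1 := by
    filter_upwards [haeF] with r hr
    have := theta_ge σ hσ (mem_Ioi.1 hr).le
    simp only [Pi.zero_apply]; linarith
  have hnonnegG : 0 ≤ᵐ[G] fun r => θfun σ r - 1 := by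
    filter_upwards [haeG] with r hr
    have := theta_ge σ hσ (mem_Ioi.1 hr).le
    simp only [Pi.zero_apply]; linarith
  have hcmp : (∫⁻ r, ENNReal.ofReal (θfun σ r - 1) ∂F) * ENNReal.ofReal (∫ t in Ioi (0:ℝ), f1 t)
      ≤ (∫⁻ r, ENNReal.ofReal (θfun σ r - 1) ∂G) * ENNReal.ofReal (∫ t in Ioi (0:ℝ), f1 t) := by
    rw [aux_main σ hσ F hFc, aux_main σ hσ G hGc]
    refine lintegral_mono_ae ?_
    refine (ae_restrict_iff' measurableSet_Ioi).2 (ae_of_all _ fun t ht => ?_)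
    have ht' := mem_Ioi.1 ht
    have hs : (0:ℝ) ≤ 2*t/σ^2 := div_nonneg (by linarith) (sq_nonneg σ)
    exact mul_le_mul_right (tsub_le_tsub_left (ENNReal.ofReal_le_ofReal (hdom _ hs)) 1) _
  have hle : (∫⁻ r, ENNReal.ofReal (θfun σ r - 1) ∂F)
      ≤ ∫⁻ r, ENNReal.ofReal (θfun σ r - 1) ∂G :=
    (ENNReal.mul_le_mul_iff_left hJ0 ENNReal.ofReal_ne_top).1 hcmp
  have hLGfin : (∫⁻ r, ENNReal.ofReal (θfun σ r - 1) ∂G) ≠ ⊤ := by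
    have hint : Integrable (fun r => θfun σ r - 1) G := hIntG.sub (integrable_const 1)
    exact ((hasFiniteIntegral_iff_ofReal hnonnegG).1 hint.hasFiniteIntegral).ne
  have hF' : ∫ r, (θfun σ r - 1) ∂F
      = (∫⁻ r, ENNReal.ofReal (θfun σ r - 1) ∂F).toReal :=
    integral_eq_lintegral_of_nonneg_ae hnonnegF
      (hIntF.aestronglyMeasurable.sub aestronglyMeasurable_const)
  have hG' : ∫ r, (θfun σ r - 1) ∂G
      = (∫⁻ r, ENNReal.ofReal (θfun σ r - 1) ∂G).toReal :=
    integral_eq_lintegral_of_nonneg_ae hnonnegG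
      (hIntG.aestronglyMeasurable.sub aestronglyMeasurable_const)
  have h1 : ∫ r, (θfun σ r - 1) ∂F = (∫ r, θfun σ r ∂F) - 1 := by
    rw [integral_sub hIntF (integrable_const 1), integral_const, probReal_univ,
      one_smul]
  have h2 : ∫ r, (θfun σ r - 1) ∂G = (∫ r, θfun σ r ∂G) - 1 := by
    rw [integral_sub hIntG (integrable_const 1), integral_const, probReal_univ,
      one_smul]
  have hmono := ENNReal.toReal_mono hLGfin hle
  rw [← hF', ← hG', h1, h2] at hmono
  linarith
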